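/- Let f : [0,1] → ℝ be given by a convergent power series f(x) = −∑_{n=1}^∞ aₙ xⁿ on [0,1] with a₁ > 0 and f(x) < 0 for all x ∈ (0,1]. Then ∫₀¹ 1/(−f(x) + q) dx = Θ(−log q) as q → 0⁺. -/

import Mathlib

open MeasureTheory Filter Topology

/-- `I = Θ(R)` as `q → 0⁺`: there exist constants `0 < c ≤ C` and `q₀ > 0` such that
`c·R q ≤ I q ≤ C·R q` for all `0 < q < q₀`. -/
def IsThetaAtZero (I R : ℝ → ℝ) : Prop :=
  ∃ c C q₀ : ℝ, 0 < c ∧ c ≤ C ∧ 0 < q₀ ∧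
    ∀ q : ℝ, 0 < q → q < q₀ → c * R q ≤ I q ∧ I q ≤ C * R q

private lemma aux_intervalIntegrable_linear {k q t : ℝ} (hk : 0 ≤ k) (hq : 0 < q) (ht : 0 ≤ t) :
    IntervalIntegrable (fun x => 1 / (k * x + q)) volume 0 t := by
  apply ContinuousOn.intervalIntegrable
  intro x hx
  rw [Set.uIcc_of_le ht] at hx
  have hpos : 0 < k * x + q := by nlinarith [hx.1]
  have : ContinuousAt (fun x : ℝ => 1 / (k * x + q)) x := by
    apply continuousAt_const.div
    · exact (continuousAt_id.const_mul k).add continuousAt_const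
    · exact hpos.ne'
  exact this.continuousWithinAt

private lemma aux_integral_one_div_linear {k q t : ℝ} (hk : 0 < k) (hq : 0 < q) (ht : 0 ≤ t) :
    ∫ x in (0:ℝ)..t, 1 / (k * x + q) = (1/k) * (Real.log (k * t + q) - Real.log q) := by
  have key : ∀ x ∈ Set.uIcc (0:ℝ) t, HasDerivAt (fun y => (1/k) * Real.log (k * y + q))
      (1 / (k * x + q)) x := by
    intro x hx
    rw [Set.uIcc_of_le ht] at hx
    have hpos : 0 < k * x + q := by nlinarith [hx.1]
    have h1 : HasDerivAt (fun y : ℝ => k * y + q) k x := by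
      simpa using ((hasDerivAt_id x).const_mul k).add_const q
    have h2 := (Real.hasDerivAt_log hpos.ne').comp x h1
    have h3 := h2.const_mul (1/k)
    convert h3 using 1
    rfl; rfl; rfl
    field_simp
  have := intervalIntegral.integral_eq_sub_of_hasDerivAt key
    (aux_intervalIntegrable_linear hk.le hq ht)
  rw [this]
  simp [mul_sub]

set_option maxHeartbeats 2000000 in
/-- Let `f : [0,1] → ℝ` be given by a convergent power series
`f x = −∑_{n=1}^∞ aₙ xⁿ` on `[0,1]` with `a₁ > 0` and `f x < 0` on `(0,1]`.
Then `∫₀¹ 1/(−f x + q) dx = Θ(−log q)` as `q → 0⁺`. -/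
theorem variance_analytic_m_eq_one (a : ℕ → ℝ) (f : ℝ → ℝ)
    (hsum : ∀ x ∈ Set.Icc (0:ℝ) 1, HasSum (fun n : ℕ => a n * x ^ n) (-f x))
    (h0 : a 0 = 0)
    (h1 : 0 < a 1)
    (hneg : ∀ x ∈ Set.Ioc (0:ℝ) 1, f x < 0) :
    IsThetaAtZero (fun q : ℝ => ∫ x in (0:ℝ)..1, 1 / (-f x + q))
      (fun q : ℝ => -Real.log q) := by
  -- basic positivity facts
  have hgpos : ∀ x ∈ Set.Ioc (0:ℝ) 1, 0 < -f x := fun x hx => by linarith [hneg x hx]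
  have h1mem : (1:ℝ) ∈ Set.Icc (0:ℝ) 1 := by norm_num
  have ha1 : HasSum a (-f 1) := by simpa using hsum 1 h1mem
  have hf0 : -f 0 = 0 := by
    have h := hsum 0 (by norm_num)
    have h2 : HasSum (fun n : ℕ => a n * (0:ℝ) ^ n) 0 := by
      have : (fun n : ℕ => a n * (0:ℝ) ^ n) = fun _ => 0 := by
        funext n
        rcases Nat.eq_zero_or_pos n with rfl | hn
        · simp [h0]
        · simp [zero_pow hn.ne']
      rw [this]; exact hasSum_zero
    exact h.unique h2
  -- coefficient bound
  obtain ⟨B, hB1, hB⟩ : ∃ B : ℝ, 1 ≤ B ∧ ∀ n, |a n| ≤ B := by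
    have h0' := ha1.summable.tendsto_atTop_zero
    rw [Metric.tendsto_atTop] at h0'
    obtain ⟨N, hN⟩ := h0' 1 one_pos
    refine ⟨1 + ∑ i ∈ Finset.range N, |a i|,
      by nlinarith [Finset.sum_nonneg (fun i (_:i ∈ Finset.range N) => abs_nonneg (a i))],
      fun n => ?_⟩
    rcases lt_or_ge n N with hn | hn
    · have : |a n| ≤ ∑ i ∈ Finset.range N, |a i| :=
        Finset.single_le_sum (fun i _ => abs_nonneg (a i)) (Finset.mem_range.mpr hn)
      linarith
    · have := hN n hn
      rw [Real.dist_eq, sub_zero] at this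
      have hs : (0:ℝ) ≤ ∑ i ∈ Finset.range N, |a i| :=
        Finset.sum_nonneg fun i _ => abs_nonneg _
      linarith
  have hB0 : 0 < B := lt_of_lt_of_le one_pos hB1
  -- pointwise upper bound on [0, 1/2]
  have hup : ∀ x ∈ Set.Icc (0:ℝ) (1/2), -f x ≤ 2 * B * x := by
    intro x hx
    obtain ⟨hx0, hx2⟩ := hx
    have hx1 : x < 1 := by linarith
    have hsh : HasSum (fun n : ℕ => a (n+1) * x ^ (n+1)) (-f x) :=
      (hasSum_nat_add_iff (f := fun n : ℕ => a n * x ^ n) 1).mpr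
        (by simpa [h0] using hsum x ⟨hx0, by linarith⟩)
    have hg : HasSum (fun n : ℕ => B * x ^ (n+1)) (B * x * (1 - x)⁻¹) := by
      have := (hasSum_geometric_of_lt_one hx0 hx1).mul_left (B * x)
      convert this using 2 with n; rfl; ring
    have hle : -f x ≤ B * x * (1 - x)⁻¹ := by
      refine hasSum_le (fun n => ?_) hsh hg
      have hxp : 0 ≤ x ^ (n+1) := pow_nonneg hx0 _
      have := (abs_le.mp (hB (n+1))).2
      nlinarith
    have hinv : (1 - x)⁻¹ ≤ 2 := by
      rw [inv_le_comm₀ (by linarith) (by norm_num)]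
      linarith
    nlinarith [mul_le_mul_of_nonneg_left hinv (mul_nonneg hB0.le hx0)]
  -- pointwise lower bound on [0, δ]
  set δ : ℝ := min (1/2) (a 1 / (4 * B)) with hδdef
  have hδ0 : 0 < δ := lt_min (by norm_num) (by positivity)
  have hδhalf : δ ≤ 1/2 := min_le_left _ _
  have hδa : δ ≤ a 1 / (4 * B) := min_le_right _ _
  have hlow : ∀ x ∈ Set.Icc (0:ℝ) δ, a 1 / 2 * x ≤ -f x := by
    intro x hx
    obtain ⟨hx0, hxδ⟩ := hx
    have hx2 : x ≤ 1/2 := le_trans hxδ hδhalf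
    have hx1 : x < 1 := by linarith
    have hsh : HasSum (fun n : ℕ => a (n+2) * x ^ (n+2)) (-f x - a 1 * x) := by
      refine (hasSum_nat_add_iff (f := fun n : ℕ => a n * x ^ n) 2).mpr ?_
      have e : ∑ i ∈ Finset.range 2, a i * x ^ i = a 1 * x := by
        simp [Finset.sum_range_succ, h0]
      rw [e]
      simpa using hsum x ⟨hx0, by linarith⟩
    have hg : HasSum (fun n : ℕ => -(B * x ^ (n+2))) (-(B * x^2 * (1 - x)⁻¹)) := by
      have := ((hasSum_geometric_of_lt_one hx0 hx1).mul_left (B * x^2)).neg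
      convert this using 2 with n; rfl; ring
    have hle : -(B * x^2 * (1 - x)⁻¹) ≤ -f x - a 1 * x := by
      refine hasSum_le (fun n => ?_) hg hsh
      have hxp : 0 ≤ x ^ (n+2) := pow_nonneg hx0 _
      have := (abs_le.mp (hB (n+2))).1
      nlinarith
    have hinv : (1 - x)⁻¹ ≤ 2 := by
      rw [inv_le_comm₀ (by linarith) (by norm_num)]
      linarith
    have htail : -(2 * B * x^2) ≤ -f x - a 1 * x := by
      nlinarith [mul_le_mul_of_nonneg_left hinv (mul_nonneg hB0.le (sq_nonneg x))]
    -- x ≤ a1/(4B) gives 2 B x^2 ≤ (a1/2) x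
    have hxb : x ≤ a 1 / (4 * B) := le_trans hxδ hδa
    have hxb' : 4 * B * x ≤ a 1 := by
      rw [le_div_iff₀ (by positivity)] at hxb
      linarith
    nlinarith [mul_le_mul_of_nonneg_right hxb' hx0]
  -- positive lower bound m on [δ, 1]
  obtain ⟨m, hm0, hm⟩ : ∃ m : ℝ, 0 < m ∧ ∀ x ∈ Set.Icc δ 1, m ≤ -f x := by
    set G : ℝ → ℝ := fun x => ∑' n, a n * x ^ n with hG
    have hGf : ∀ x ∈ Set.Icc (0:ℝ) 1, G x = -f x := fun x hx => (hsum x hx).tsum_eq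
    have hcont : ∀ r : ℝ, 0 ≤ r → r < 1 → ContinuousOn G (Set.Icc 0 r) := by
      intro r hr0 hr1
      apply continuousOn_tsum (u := fun n => B * r ^ n)
      · exact fun i => (continuous_const.mul (continuous_pow i)).continuousOn
      · exact (summable_geometric_of_lt_one hr0 hr1).mul_left B
      · intro n x hx
        rw [Real.norm_eq_abs, abs_mul, abs_pow]
        have hxr : |x| ≤ r := by rw [abs_of_nonneg hx.1]; exact hx.2
        have hpw : |x| ^ n ≤ r ^ n := pow_le_pow_left₀ (abs_nonneg x) hxr n
        have hBn := hB n
        nlinarith [abs_nonneg (a n), pow_nonneg (abs_nonneg x) n]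
    have hf1pos : 0 < -f 1 := hgpos 1 (by norm_num)
    have habel : Tendsto G (𝓝[<] (1:ℝ)) (𝓝 (-f 1)) :=
      Real.tendsto_tsum_powerSeries_nhdsWithin_lt ha1.tendsto_sum_nat
    have hev : ∀ᶠ x in 𝓝[<] (1:ℝ), -f 1 / 2 < G x :=
      habel.eventually (eventually_gt_nhds (by linarith))
    rw [eventually_nhdsWithin_iff, Metric.eventually_nhds_iff] at hev
    obtain ⟨ε, hε0, hε⟩ := hev
    set ε' : ℝ := min ε (1/4) with hε'
    have hε'0 : 0 < ε' := lt_min hε0 (by norm_num)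
    have hε'4 : ε' ≤ 1/4 := min_le_right _ _
    set r : ℝ := 1 - ε'/2 with hr
    have hr1 : r < 1 := by simp [hr]; linarith
    have hδr : δ ≤ r := by simp only [hr]; linarith
    have hK : IsCompact (Set.Icc δ r) := isCompact_Icc
    have hKne : (Set.Icc δ r).Nonempty := Set.nonempty_Icc.mpr hδr
    have hcr : ContinuousOn G (Set.Icc δ r) :=
      (hcont r (by linarith) hr1).mono (Set.Icc_subset_Icc_left hδ0.le)
    obtain ⟨x₀, hx₀K, hx₀min⟩ := hK.exists_isMinOn hKne hcr
    have hx₀pos : 0 < G x₀ := by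
      have hx₀mem : x₀ ∈ Set.Icc (0:ℝ) 1 := ⟨by linarith [hx₀K.1], by linarith [hx₀K.2]⟩
      rw [hGf x₀ hx₀mem]
      exact hgpos x₀ ⟨by linarith [hx₀K.1], by linarith [hx₀K.2]⟩
    refine ⟨min (G x₀) (-f 1 / 2), lt_min hx₀pos (by linarith), ?_⟩
    intro x hx
    have hxmem : x ∈ Set.Icc (0:ℝ) 1 := ⟨by linarith [hx.1], hx.2⟩
    rw [← hGf x hxmem]
    rcases le_or_gt x r with hxr | hxr
    · exact le_trans (min_le_left _ _) (hx₀min ⟨hx.1, hxr⟩)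
    · rcases eq_or_lt_of_le hx.2 with heq | hlt
      · rw [heq, hGf 1 h1mem]
        exact le_trans (min_le_right _ _) (by linarith)
      · have hd : dist x 1 < ε := by
          rw [Real.dist_eq, abs_of_nonpos (by linarith)]
          have h2 : 1 - x < ε'/2 := by simp only [hr] at hxr; linarith
          have h3 : ε' ≤ ε := min_le_left _ _
          linarith [hε'0]
        exact le_trans (min_le_right _ _) (hε hd (Set.mem_Iio.mpr hlt)).le
  -- nonnegativity of -f on [0,1]
  have hgnn : ∀ x ∈ Set.Icc (0:ℝ) 1, 0 ≤ -f x := by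
    intro x hx
    rcases eq_or_lt_of_le hx.1 with heq | hlt
    · rw [← heq, hf0]
    · exact (hgpos x ⟨hlt, hx.2⟩).le
  -- integrability of the integrand on subintervals of [0,1]
  have hInt : ∀ q : ℝ, 0 < q → ∀ s t : ℝ, 0 ≤ s → s ≤ t → t ≤ 1 →
      IntervalIntegrable (fun x => 1 / (-f x + q)) volume s t := by
    intro q hq s t hs hst ht
    have hwhole : IntervalIntegrable (fun x => 1 / (-f x + q)) volume 0 1 := by
      have hmeas : AEMeasurable (fun x => -f x) (volume.restrict (Set.Ioc (0:ℝ) 1)) := by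
        apply aemeasurable_of_tendsto_metrizable_ae'
          (f := fun n x => ∑ i ∈ Finset.range n, a i * x ^ i)
        · intro n
          exact (Finset.measurable_sum _ fun i _ =>
            (measurable_const.mul (measurable_id.pow_const i))).aemeasurable
        · rw [ae_restrict_iff' measurableSet_Ioc]
          filter_upwards with x hx
          exact (hsum x ⟨hx.1.le, hx.2⟩).tendsto_sum_nat
      have hmeas2 : AEMeasurable (fun x => 1 / (-f x + q))
          (volume.restrict (Set.Ioc (0:ℝ) 1)) := by
        simp only [one_div]; exact (hmeas.add (aemeasurable_const (b := q))).inv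
      rw [intervalIntegrable_iff_integrableOn_Ioc_of_le (by norm_num : (0:ℝ) ≤ 1)]
      refine Integrable.mono' (g := fun _ => 1/q)
        (integrableOn_const measure_Ioc_lt_top.ne) hmeas2.aestronglyMeasurable ?_
      rw [ae_restrict_iff' measurableSet_Ioc]
      filter_upwards with x hx
      have hg := hgpos x hx
      have hd : 0 < -f x + q := by linarith
      rw [Real.norm_eq_abs, abs_of_pos (by positivity)]
      rw [div_le_div_iff₀ hd hq]
      nlinarith
    refine hwhole.mono_set ?_
    rw [Set.uIcc_of_le hst, Set.uIcc_of_le (by norm_num : (0:ℝ) ≤ 1)]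
    exact Set.Icc_subset_Icc hs ht
  -- constants
  have hlog2 : 0 < Real.log 2 := Real.log_pos (by norm_num)
  set c : ℝ := 1 / (2 * B) with hc
  have hc0 : 0 < c := by positivity
  set K : ℝ := (2 / a 1) * Real.log (a 1 + 1) + 1 / m with hK
  have hK0 : 0 ≤ K := by
    have hl1 : 0 ≤ Real.log (a 1 + 1) := Real.log_nonneg (by linarith)
    have hl2 : 0 ≤ (2 / a 1) * Real.log (a 1 + 1) := by positivity
    have hm' : 0 ≤ 1 / m := by positivity
    rw [hK]
    linarith
  set C : ℝ := max c (2 / a 1 + K / Real.log 2) with hC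
  refine ⟨c, C, 1/2, hc0, le_max_left _ _, by norm_num, ?_⟩
  intro q hq0 hq2
  have hlogq : Real.log 2 ≤ -Real.log q := by
    have := Real.log_le_log hq0 (le_of_lt hq2)
    rw [show (1:ℝ)/2 = 2⁻¹ by norm_num, Real.log_inv] at this
    linarith
  have hlogq0 : 0 ≤ -Real.log q := le_trans hlog2.le hlogq
  have hq1 : q < 1 := by linarith
  constructor
  · -- lower bound
    have hsplit : (∫ x in (0:ℝ)..1, 1 / (-f x + q))
        = (∫ x in (0:ℝ)..(1/2), 1 / (-f x + q)) + ∫ x in (1/2:ℝ)..1, 1 / (-f x + q) :=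
      (intervalIntegral.integral_add_adjacent_intervals
        (hInt q hq0 0 (1/2) le_rfl (by norm_num) (by norm_num))
        (hInt q hq0 (1/2) 1 (by norm_num) (by norm_num) le_rfl)).symm
    have hsecond : 0 ≤ ∫ x in (1/2:ℝ)..1, 1 / (-f x + q) := by
      apply intervalIntegral.integral_nonneg (by norm_num)
      intro u hu
      have := hgnn u ⟨by linarith [hu.1], hu.2⟩
      positivity
    have hcomp : (∫ x in (0:ℝ)..(1/2), 1 / (2 * B * x + q))
        ≤ ∫ x in (0:ℝ)..(1/2), 1 / (-f x + q) := by
      apply intervalIntegral.integral_mono_on (by norm_num)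
        (aux_intervalIntegrable_linear (by positivity) hq0 (by norm_num))
        (hInt q hq0 0 (1/2) le_rfl (by norm_num) (by norm_num))
      intro x hx
      have h1' := hup x hx
      have h2' := hgnn x ⟨hx.1, by linarith [hx.2]⟩
      apply one_div_le_one_div_of_le (by linarith)
      linarith
    have hval : (∫ x in (0:ℝ)..(1/2), 1 / (2 * B * x + q))
        = (1 / (2 * B)) * (Real.log (2 * B * (1/2) + q) - Real.log q) :=
      aux_integral_one_div_linear (by positivity) hq0 (by norm_num)
    have hlogB : 0 ≤ Real.log (2 * B * (1/2) + q) := Real.log_nonneg (by linarith)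
    show c * (-Real.log q) ≤ ∫ x in (0:ℝ)..1, 1 / (-f x + q)
    rw [hsplit]
    have hkey : c * (-Real.log q) ≤ ∫ x in (0:ℝ)..(1/2), 1 / (2 * B * x + q) := by
      rw [hval, hc]
      have h2B : (0:ℝ) ≤ 1 / (2*B) := by positivity
      exact mul_le_mul_of_nonneg_left (by linarith) h2B
    linarith [le_trans hkey hcomp]
  · -- upper bound
    have hδ1 : δ ≤ 1 := by linarith
    have hsplit : (∫ x in (0:ℝ)..1, 1 / (-f x + q))
        = (∫ x in (0:ℝ)..δ, 1 / (-f x + q)) + ∫ x in δ..1, 1 / (-f x + q) :=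
      (intervalIntegral.integral_add_adjacent_intervals
        (hInt q hq0 0 δ le_rfl hδ0.le hδ1)
        (hInt q hq0 δ 1 hδ0.le hδ1 le_rfl)).symm
    have hfirst : (∫ x in (0:ℝ)..δ, 1 / (-f x + q))
        ≤ ∫ x in (0:ℝ)..δ, 1 / (a 1 / 2 * x + q) := by
      apply intervalIntegral.integral_mono_on hδ0.le
        (hInt q hq0 0 δ le_rfl hδ0.le hδ1)
        (aux_intervalIntegrable_linear (by positivity) hq0 hδ0.le)
      intro x hx
      have h1' := hlow x hx
      have hx0 : 0 ≤ x := hx.1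
      apply one_div_le_one_div_of_le (by positivity)
      linarith
    have hval : (∫ x in (0:ℝ)..δ, 1 / (a 1 / 2 * x + q))
        = (1 / (a 1 / 2)) * (Real.log (a 1 / 2 * δ + q) - Real.log q) :=
      aux_integral_one_div_linear (by positivity) hq0 hδ0.le
    have hargle : a 1 / 2 * δ + q ≤ a 1 + 1 := by
      have h' : a 1 / 2 * δ ≤ a 1 / 2 * (1/2) :=
        mul_le_mul_of_nonneg_left hδhalf (by positivity)
      linarith
    have hlogle : Real.log (a 1 / 2 * δ + q) ≤ Real.log (a 1 + 1) :=
      Real.log_le_log (by positivity) hargle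
    have hsecond : (∫ x in δ..1, 1 / (-f x + q)) ≤ 1 / m := by
      have hmono : (∫ x in δ..1, 1 / (-f x + q)) ≤ ∫ _x in δ..1, 1 / m := by
        apply intervalIntegral.integral_mono_on hδ1
          (hInt q hq0 δ 1 hδ0.le hδ1 le_rfl) intervalIntegrable_const
        intro x hx
        have hmx := hm x hx
        apply one_div_le_one_div_of_le hm0
        linarith
      have hconst : (∫ _x in δ..1, 1 / m) = (1 - δ) * (1 / m) := by
        rw [intervalIntegral.integral_const, smul_eq_mul]
      rw [hconst] at hmono
      have hfin : (1 - δ) * (1 / m) ≤ 1 / m := by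
        have h1m : (0:ℝ) ≤ 1 / m := by positivity
        have := mul_le_mul_of_nonneg_right (by linarith : (1:ℝ) - δ ≤ 1) h1m
        linarith
      linarith
    show (∫ x in (0:ℝ)..1, 1 / (-f x + q)) ≤ C * (-Real.log q)
    rw [hsplit]
    have hfirstval : (∫ x in (0:ℝ)..δ, 1 / (-f x + q))
        ≤ (2 / a 1) * (Real.log (a 1 + 1) - Real.log q) := by
      rw [hval] at hfirst
      have h2a : 1 / (a 1 / 2) = 2 / a 1 := one_div_div (a 1) 2
      rw [h2a] at hfirst
      have h2a0 : (0:ℝ) ≤ 2 / a 1 := by positivity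
      calc (∫ x in (0:ℝ)..δ, 1 / (-f x + q))
          ≤ (2 / a 1) * (Real.log (a 1 / 2 * δ + q) - Real.log q) := hfirst
        _ ≤ (2 / a 1) * (Real.log (a 1 + 1) - Real.log q) :=
            mul_le_mul_of_nonneg_left (sub_le_sub_right hlogle _) h2a0
    -- combine
    have hring : (2 / a 1) * (Real.log (a 1 + 1) - Real.log q)
        = (2 / a 1) * Real.log (a 1 + 1) + (2 / a 1) * (-Real.log q) := by ring
    have htotal : (∫ x in (0:ℝ)..δ, 1 / (-f x + q)) + (∫ x in δ..1, 1 / (-f x + q))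
        ≤ (2 / a 1) * (-Real.log q) + K := by
      rw [hK]
      rw [hring] at hfirstval
      linarith
    have hKbound : K ≤ (K / Real.log 2) * (-Real.log q) := by
      rw [div_mul_eq_mul_div, le_div_iff₀ hlog2]
      exact mul_le_mul_of_nonneg_left hlogq hK0
    have hCge : 2 / a 1 + K / Real.log 2 ≤ C := le_max_right _ _
    have hring2 : (2 / a 1 + K / Real.log 2) * (-Real.log q)
        = (2 / a 1) * (-Real.log q) + (K / Real.log 2) * (-Real.log q) := by ring
    have hC2 : (2 / a 1) * (-Real.log q) + K
        ≤ (2 / a 1 + K / Real.log 2) * (-Real.log q) := by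
      rw [hring2]
      linarith
    calc (∫ x in (0:ℝ)..δ, 1 / (-f x + q)) + (∫ x in δ..1, 1 / (-f x + q))
        ≤ (2 / a 1 + K / Real.log 2) * (-Real.log q) := le_trans htotal hC2
      _ ≤ C * (-Real.log q) := mul_le_mul_of_nonneg_right hCge hlogq0
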